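/- arXiv:2406.00260 — 2 statements merged into one kernel-verified Lean document; each statement's English description precedes it below -/
import Mathlib

section
/- Let N, n ≥ 1, for each k ∈ {1,…,N} let A_k ∈ ℝ^{m_k×n}, y_k ∈ ℝ^{m_k}, x_k ∈ ℝ^n, and set g_k := A_kᵀ(A_k x_k − y_k) ∈ ℝ^n. Define G : ℝ^n → ℝ by G(p) = (1/N) Σ_{k=1}^N (1/2)‖A_k(x_k − p ⊙ g_k) − y_k‖₂², where ⊙ is the Hadamard (entrywise) product. If the matrix M := (1/N) Σ_{k=1}^N (g_k g_kᵀ) ⊙ (A_kᵀA_k) is invertible, then p* := M⁻¹ ((1/N) Σ_{k=1}^N g_k ⊙ g_k) is a global minimizer of G. -/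
open Matrix

private lemma stmt5_helper {m n : ℕ} (A : Matrix (Fin m) (Fin n) ℝ) (C : Fin m → ℝ)
    (g : Fin n → ℝ) (hg : ∀ l, g l = ∑ i, A i l * C i)
    (ps q : Fin n → ℝ) :
    ∑ i, (C i - A.mulVec (fun j => ps j * g j) i) * A.mulVec (fun j => q j * g j) i
      = ∑ l, q l * (g l * g l -
        (Matrix.hadamard (Matrix.vecMulVec g g) (Aᵀ * A)).mulVec ps l) := by
  have h1 : ∀ l, (Matrix.hadamard (Matrix.vecMulVec g g) (Aᵀ * A)).mulVec ps l
      = ∑ j, (g l * g j * ∑ i, A i l * A i j) * ps j := by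
    intro l
    simp [Matrix.mulVec, dotProduct, Matrix.hadamard, Matrix.vecMulVec,
      Matrix.mul_apply, Matrix.transpose_apply]
  simp only [h1]
  simp only [Matrix.mulVec, dotProduct]
  calc ∑ i, (C i - ∑ j, A i j * (ps j * g j)) * ∑ l, A i l * (q l * g l)
      = ∑ i, ∑ l, (C i - ∑ j, A i j * (ps j * g j)) * (A i l * (q l * g l)) := by
        apply Finset.sum_congr rfl; intro i _; rw [Finset.mul_sum]
    _ = ∑ l, ∑ i, (C i - ∑ j, A i j * (ps j * g j)) * (A i l * (q l * g l)) :=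
        Finset.sum_comm
    _ = ∑ l, q l * (g l * g l - ∑ j, (g l * g j * ∑ i, A i l * A i j) * ps j) := by
        apply Finset.sum_congr rfl; intro l _
        have e1 : ∑ i, (C i - ∑ j, A i j * (ps j * g j)) * (A i l * (q l * g l))
            = (q l * g l) * ((∑ i, A i l * C i)
              - ∑ i, A i l * ∑ j, A i j * (ps j * g j)) := by
          rw [mul_sub, Finset.mul_sum, Finset.mul_sum, ← Finset.sum_sub_distrib]
          apply Finset.sum_congr rfl; intro i _; ring
        have e2 : ∑ i, A i l * ∑ j, A i j * (ps j * g j)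
            = ∑ j, (∑ i, A i l * A i j) * (ps j * g j) := by
          calc ∑ i, A i l * ∑ j, A i j * (ps j * g j)
              = ∑ i, ∑ j, (A i l * A i j) * (ps j * g j) := by
                apply Finset.sum_congr rfl; intro i _
                rw [Finset.mul_sum]
                apply Finset.sum_congr rfl; intro j _; ring
            _ = ∑ j, ∑ i, (A i l * A i j) * (ps j * g j) := Finset.sum_comm
            _ = ∑ j, (∑ i, A i l * A i j) * (ps j * g j) := by
                apply Finset.sum_congr rfl; intro j _; rw [Finset.sum_mul]
        rw [e1, e2, ← hg l, mul_sub, mul_sub]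
        congr 1
        · ring
        rw [Finset.mul_sum, Finset.mul_sum]
        apply Finset.sum_congr rfl; intro j _
        simp only [Finset.mul_sum, Finset.sum_mul]
        apply Finset.sum_congr rfl; intro i _; ring

/-- Closed-form optimal diagonal preconditioner for averaged least-squares
objectives: if `M = (1/N) ∑ (g_k g_kᵀ) ⊙ (A_kᵀA_k)` is invertible, then
`p* = M⁻¹ ((1/N) ∑ g_k ⊙ g_k)` globally minimizes
`G(p) = (1/N) ∑ (1/2)‖A_k(x_k − p ⊙ g_k) − y_k‖₂²`. -/
theorem stmt_5 {N n : ℕ} (hN : 1 ≤ N) (hn : 1 ≤ n)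
    (m : Fin N → ℕ)
    (A : ∀ k, Matrix (Fin (m k)) (Fin n) ℝ)
    (y : ∀ k, Fin (m k) → ℝ)
    (x : Fin N → Fin n → ℝ)
    (gv : Fin N → Fin n → ℝ)
    (hgv : ∀ k, gv k = (A k)ᵀ.mulVec ((A k).mulVec (x k) - y k))
    (G : (Fin n → ℝ) → ℝ)
    (hG : ∀ p, G p = (1 / (N : ℝ)) * ∑ k,
        (1 / 2) * ∑ i, ((A k).mulVec (x k - fun j => p j * gv k j) - y k) i ^ 2)
    (M : Matrix (Fin n) (Fin n) ℝ)
    (hM : M = (1 / (N : ℝ)) •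
        ∑ k, Matrix.hadamard (Matrix.vecMulVec (gv k) (gv k)) ((A k)ᵀ * A k))
    (hMinv : IsUnit M.det)
    (pstar : Fin n → ℝ)
    (hpstar : pstar = M⁻¹.mulVec ((1 / (N : ℝ)) • ∑ k, fun i => gv k i * gv k i)) :
    ∀ p, G pstar ≤ G p := by
  intro p
  have hNpos : (0 : ℝ) < (N : ℝ) := by exact_mod_cast Nat.lt_of_lt_of_le Nat.zero_lt_one hN
  have hNne : (1 / (N : ℝ)) ≠ 0 := by positivity
  set q : Fin n → ℝ := fun j => p j - pstar j with hq
  set C : ∀ k, Fin (m k) → ℝ := fun k => (A k).mulVec (x k) - y k with hC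
  have hgC : ∀ k l, gv k l = ∑ i, A k i l * C k i := by
    intro k l
    rw [hgv k]
    simp [Matrix.mulVec, dotProduct, Matrix.transpose_apply, hC]
  set Bv : (Fin n → ℝ) → ∀ k, Fin (m k) → ℝ :=
    fun v k => (A k).mulVec (fun j => v j * gv k j) with hBv
  have hdecomp : ∀ (v : Fin n → ℝ) k i,
      ((A k).mulVec (x k - fun j => v j * gv k j) - y k) i = C k i - Bv v k i := by
    intro v k i
    simp only [hBv, hC, Matrix.mulVec_sub, Pi.sub_apply]
    ring
  have hBp : ∀ k i, Bv p k i = Bv pstar k i + Bv q k i := by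
    intro k i
    simp only [hBv]
    rw [show (fun j => p j * gv k j)
        = (fun j => pstar j * gv k j) + fun j => q j * gv k j from
      funext fun j => by simp [hq]; ring, Matrix.mulVec_add]
    simp
  -- key fact: M *ᵥ pstar = b
  have hb : M.mulVec pstar = (1 / (N : ℝ)) • ∑ k, fun i => gv k i * gv k i := by
    rw [hpstar, Matrix.mulVec_mulVec, Matrix.mul_nonsing_inv M hMinv, Matrix.one_mulVec]
  have hS : (∑ k, Matrix.hadamard (Matrix.vecMulVec (gv k) (gv k)) ((A k)ᵀ * A k)).mulVec
      pstar = ∑ k, fun i => gv k i * gv k i := by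
    have := hb
    rw [hM, Matrix.smul_mulVec] at this
    exact smul_right_injective (Fin n → ℝ) hNne this
  -- the cross term vanishes
  have hcross : ∑ k, ∑ i, (C k i - Bv pstar k i) * Bv q k i = 0 := by
    rw [Finset.sum_congr rfl fun k _ => stmt5_helper (A k) (C k) (gv k) (hgC k) pstar q]
    rw [Finset.sum_comm]
    apply Finset.sum_eq_zero
    intro l _
    rw [← Finset.mul_sum, Finset.sum_sub_distrib]
    have h2 : ∑ k, (Matrix.hadamard (Matrix.vecMulVec (gv k) (gv k))
        ((A k)ᵀ * A k)).mulVec pstar l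
        = (∑ k, Matrix.hadamard (Matrix.vecMulVec (gv k) (gv k)) ((A k)ᵀ * A k)).mulVec
          pstar l := by
      simp only [Matrix.mulVec, dotProduct, Matrix.sum_apply,
        Matrix.hadamard_apply, Finset.sum_mul]
      exact Finset.sum_comm
    rw [h2, hS]
    simp [Finset.sum_apply]
  -- expansion of each summand
  have expand : ∀ k, ∑ i, ((A k).mulVec (x k - fun j => p j * gv k j) - y k) i ^ 2
      = (∑ i, ((A k).mulVec (x k - fun j => pstar j * gv k j) - y k) i ^ 2)
        - 2 * (∑ i, (C k i - Bv pstar k i) * Bv q k i) + ∑ i, (Bv q k i) ^ 2 := by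
    intro k
    have hpt : ∀ i, ((A k).mulVec (x k - fun j => p j * gv k j) - y k) i ^ 2
        = ((A k).mulVec (x k - fun j => pstar j * gv k j) - y k) i ^ 2
          - 2 * ((C k i - Bv pstar k i) * Bv q k i) + (Bv q k i) ^ 2 := by
      intro i
      rw [hdecomp p k i, hdecomp pstar k i, hBp k i]
      ring
    rw [Finset.sum_congr rfl fun i _ => hpt i, Finset.sum_add_distrib,
      Finset.sum_sub_distrib, ← Finset.mul_sum]
  have hGp : G p = G pstar
      - (1 / (N : ℝ)) * (∑ k, ∑ i, (C k i - Bv pstar k i) * Bv q k i)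
      + (1 / (N : ℝ)) * ∑ k, (1 / 2) * ∑ i, (Bv q k i) ^ 2 := by
    rw [hG p, hG pstar]
    rw [Finset.sum_congr rfl fun k _ => by rw [expand k]]
    rw [Finset.sum_congr rfl (fun (k : Fin N) _ => show
        (1 / 2 : ℝ) * ((∑ i, ((A k).mulVec (x k - fun j => pstar j * gv k j) - y k) i ^ 2)
          - 2 * (∑ i, (C k i - Bv pstar k i) * Bv q k i) + ∑ i, (Bv q k i) ^ 2)
        = (1 / 2) * (∑ i, ((A k).mulVec (x k - fun j => pstar j * gv k j) - y k) i ^ 2)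
          - (∑ i, (C k i - Bv pstar k i) * Bv q k i)
          + (1 / 2) * ∑ i, (Bv q k i) ^ 2 from by ring)]
    rw [Finset.sum_add_distrib, Finset.sum_sub_distrib]
    ring
  have hnn : 0 ≤ (1 / (N : ℝ)) * ∑ k, (1 / 2) * ∑ i, (Bv q k i) ^ 2 := by
    apply mul_nonneg (by positivity)
    apply Finset.sum_nonneg
    intro k _
    positivity
  rw [hGp, hcross]
  linarith
end

section
/- Let f_1,…,f_N : ℝ^n → ℝ be differentiable, bounded below, with ∇f_k Lipschitz continuous with constant L_k > 0, and set L = max{L_1,…,L_N}. Suppose the sequences (x_k^t)_{t≥0} ⊂ ℝ^n for k ∈ {1,…,N} satisfy, for every t ≥ 0, the domination condition (1/N) Σ_{k=1}^N f_k(x_k^{t+1}) ≤ (1/N) Σ_{k=1}^N f_k(x_k^t − (1/L)∇f_k(x_k^t)). Then for every k ∈ {1,…,N}, ∇f_k(x_k^t) → 0 as t → ∞. -/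
open InnerProductSpace

lemma descent {n : ℕ} (f : EuclideanSpace ℝ (Fin n) → ℝ) (hdiff : Differentiable ℝ f)
    (L : ℝ) (hL : 0 ≤ L) (hLip : ∀ x y, ‖gradient f x - gradient f y‖ ≤ L * ‖x - y‖)
    (x y : EuclideanSpace ℝ (Fin n)) :
    f y ≤ f x + @inner ℝ _ _ (gradient f x) (y - x) + L / 2 * ‖y - x‖ ^ 2 := by
  set v := y - x with hv
  set g : ℝ → ℝ := fun s =>
    f x + s * @inner ℝ _ _ (gradient f x) v + L * s ^ 2 / 2 * ‖v‖ ^ 2 - f (x + s • v) with hgdef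
  have hφ : ∀ p, HasFDerivAt f (toDual ℝ _ (gradient f p)) p := fun p =>
    (hdiff p).hasGradientAt.hasFDerivAt
  have hcurve : ∀ s : ℝ, HasDerivAt (fun s : ℝ => x + s • v) v s := by
    intro s
    simpa using ((hasDerivAt_id s).smul_const v).const_add x
  have key : ∀ s : ℝ, HasDerivAt (fun s => f (x + s • v))
      (@inner ℝ _ _ (gradient f (x + s • v)) v) s := by
    intro s
    have := (hφ (x + s • v)).comp_hasDerivAt s (hcurve s)
    rw [InnerProductSpace.toDual_apply_apply] at this
    exact this
  have hg : ∀ s : ℝ, HasDerivAt g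
      (@inner ℝ _ _ (gradient f x) v + L * s * ‖v‖ ^ 2
        - @inner ℝ _ _ (gradient f (x + s • v)) v) s := by
    intro s
    have h1 : HasDerivAt (fun s : ℝ => f x + s * @inner ℝ _ _ (gradient f x) v
        + L * s ^ 2 / 2 * ‖v‖ ^ 2)
        (@inner ℝ _ _ (gradient f x) v + L * s * ‖v‖ ^ 2) s := by
      have ha : HasDerivAt (fun s : ℝ => s * @inner ℝ _ _ (gradient f x) v)
          (@inner ℝ _ _ (gradient f x) v) s := by
        simpa using hasDerivAt_mul_const (@inner ℝ _ _ (gradient f x) v) (x := s)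
      have hb : HasDerivAt (fun s : ℝ => L * s ^ 2 / 2 * ‖v‖ ^ 2)
          (L * s * ‖v‖ ^ 2) s := by
        have := (hasDerivAt_pow 2 s).const_mul (L / 2)
        have := this.mul_const (‖v‖ ^ 2)
        have e : L / 2 * ((2:ℕ) * s ^ (2 - 1)) * ‖v‖ ^ 2 = L * s * ‖v‖ ^ 2 := by push_cast; ring
        rw [e] at this
        exact this.congr_of_eventuallyEq (Filter.Eventually.of_forall fun y => by ring)
      exact (ha.const_add (f x)).add hb
    exact h1.sub (key s)
  have hgd : ∀ s : ℝ, 0 ≤ s →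
      0 ≤ @inner ℝ _ _ (gradient f x) v + L * s * ‖v‖ ^ 2
        - @inner ℝ _ _ (gradient f (x + s • v)) v := by
    intro s hs
    have h1 : @inner ℝ _ _ (gradient f (x + s • v)) v - @inner ℝ _ _ (gradient f x) v
        ≤ L * s * ‖v‖ ^ 2 := by
      have h2 : @inner ℝ _ _ (gradient f (x + s • v) - gradient f x) v
          ≤ ‖gradient f (x + s • v) - gradient f x‖ * ‖v‖ := real_inner_le_norm _ _
      have h3 : ‖gradient f (x + s • v) - gradient f x‖ ≤ L * (s * ‖v‖) := by
        have := hLip (x + s • v) x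
        simpa [norm_smul, abs_of_nonneg hs] using this
      have h4 : ‖gradient f (x + s • v) - gradient f x‖ * ‖v‖ ≤ L * (s * ‖v‖) * ‖v‖ :=
        mul_le_mul_of_nonneg_right h3 (norm_nonneg _)
      rw [inner_sub_left] at h2
      nlinarith [norm_nonneg v]
    linarith
  have hmono : MonotoneOn g (Set.Icc (0 : ℝ) 1) := by
    apply monotoneOn_of_deriv_nonneg (convex_Icc 0 1)
    · exact (Differentiable.continuous fun s => (hg s).differentiableAt).continuousOn
    · exact fun s _ => ((hg s).differentiableAt).differentiableWithinAt
    · intro s hs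
      rw [interior_Icc] at hs
      rw [(hg s).deriv]
      exact hgd s hs.1.le
  have h01 : g 0 ≤ g 1 := hmono (by norm_num) (by norm_num) zero_le_one
  have hg0 : g 0 = f x - f x := by simp [hgdef]
  have hg1 : g 1 = f x + @inner ℝ _ _ (gradient f x) v + L / 2 * ‖v‖ ^ 2 - f y := by
    have hxy : x + (1:ℝ) • v = y := by rw [hv]; simp
    simp only [hgdef, hxy, one_pow, mul_one, one_mul]
  rw [hg0, hg1] at h01
  linarith

lemma descent_step {n : ℕ} (f : EuclideanSpace ℝ (Fin n) → ℝ) (hdiff : Differentiable ℝ f)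
    (Lk Lmax : ℝ) (hLk : 0 < Lk) (hkm : Lk ≤ Lmax)
    (hLip : ∀ x y, ‖gradient f x - gradient f y‖ ≤ Lk * ‖x - y‖)
    (x : EuclideanSpace ℝ (Fin n)) :
    f (x - (1 / Lmax) • gradient f x) ≤ f x - 1 / (2 * Lmax) * ‖gradient f x‖ ^ 2 := by
  have hM : 0 < Lmax := lt_of_lt_of_le hLk hkm
  have h := descent f hdiff Lk hLk.le hLip x (x - (1 / Lmax) • gradient f x)
  have hv : x - (1 / Lmax) • gradient f x - x = -((1 / Lmax) • gradient f x) := by abel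
  rw [hv] at h
  have hi : @inner ℝ _ _ (gradient f x) (-((1 / Lmax) • gradient f x))
      = -(1 / Lmax) * ‖gradient f x‖ ^ 2 := by
    rw [inner_neg_right, real_inner_smul_right, real_inner_self_eq_norm_sq]
    ring
  have hn : ‖-((1 / Lmax) • gradient f x)‖ ^ 2 = (1 / Lmax) ^ 2 * ‖gradient f x‖ ^ 2 := by
    rw [norm_neg, norm_smul]
    rw [Real.norm_eq_abs, abs_of_nonneg (by positivity : (0:ℝ) ≤ 1 / Lmax)]
    ring
  rw [hi, hn] at h
  have hsq : 0 ≤ ‖gradient f x‖ ^ 2 := sq_nonneg _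
  have hkey : Lk / 2 * ((1 / Lmax) ^ 2 * ‖gradient f x‖ ^ 2) - 1 / Lmax * ‖gradient f x‖ ^ 2
      ≤ -(1 / (2 * Lmax) * ‖gradient f x‖ ^ 2) := by
    set A := ‖gradient f x‖ ^ 2 with hA
    have key2 : Lk * A ≤ Lmax * A := mul_le_mul_of_nonneg_right hkm hsq
    have e : Lk / 2 * ((1 / Lmax) ^ 2 * A) - 1 / Lmax * A + 1 / (2 * Lmax) * A
        = (Lk * A - Lmax * A) / (2 * Lmax ^ 2) := by
      field_simp
      ring
    have h0 : (Lk * A - Lmax * A) / (2 * Lmax ^ 2) ≤ 0 :=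
      div_nonpos_of_nonpos_of_nonneg (by linarith) (by positivity)
    linarith
  linarith

/-- If each `f_k` is differentiable, bounded below, with `L_k`-Lipschitz
gradient, `L = max{L_k}`, and the iterates dominate (in averaged objective value) the
gradient-descent step with step size `1/L`, then `∇f_k(x_k^t) → 0` for every `k`. -/
theorem stmt_17 {n N : ℕ}
    (f : Fin N → EuclideanSpace ℝ (Fin n) → ℝ)
    (hdiff : ∀ k, Differentiable ℝ (f k))
    (hbdd : ∀ k, BddBelow (Set.range (f k)))
    (L : Fin N → ℝ) (hL : ∀ k, 0 < L k)
    (hLip : ∀ k x y, ‖gradient (f k) x - gradient (f k) y‖ ≤ L k * ‖x - y‖)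
    (Lmax : ℝ) (hLmax : IsGreatest (Set.range L) Lmax)
    (x : ℕ → Fin N → EuclideanSpace ℝ (Fin n))
    (hdom : ∀ t, (1 / (N : ℝ)) * ∑ k, f k (x (t + 1) k) ≤
        (1 / (N : ℝ)) * ∑ k, f k (x t k - (1 / Lmax) • gradient (f k) (x t k))) :
    ∀ k, Filter.Tendsto (fun t => gradient (f k) (x t k)) Filter.atTop (nhds 0) := by
  intro k
  have hkm : ∀ j, L j ≤ Lmax := fun j => hLmax.2 (Set.mem_range_self j)
  have hM : 0 < Lmax := lt_of_lt_of_le (hL k) (hkm k)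
  have hN : 0 < N := Nat.pos_of_ne_zero (by rintro rfl; exact k.elim0)
  have hNR : (0:ℝ) < 1 / (N : ℝ) := by
    have : (0:ℝ) < (N : ℝ) := Nat.cast_pos.mpr hN
    positivity
  set S : ℕ → ℝ := fun t => ∑ j, f j (x t j) with hS
  set D : ℕ → ℝ := fun t => ∑ j, ‖gradient (f j) (x t j)‖ ^ 2 with hD
  have hDnn : ∀ t, 0 ≤ D t := fun t => Finset.sum_nonneg fun j _ => sq_nonneg _
  have step : ∀ t, S (t + 1) ≤ S t - 1 / (2 * Lmax) * D t := by
    intro t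
    have h1 : S (t + 1) ≤ ∑ j, f j (x t j - (1 / Lmax) • gradient (f j) (x t j)) :=
      le_of_mul_le_mul_left (by simpa [mul_comm] using hdom t) hNR
    have h2 : ∑ j, f j (x t j - (1 / Lmax) • gradient (f j) (x t j))
        ≤ ∑ j, (f j (x t j) - 1 / (2 * Lmax) * ‖gradient (f j) (x t j)‖ ^ 2) :=
      Finset.sum_le_sum fun j _ =>
        descent_step (f j) (hdiff j) (L j) Lmax (hL j) (hkm j) (hLip j) (x t j)
    have h3 : ∑ j, (f j (x t j) - 1 / (2 * Lmax) * ‖gradient (f j) (x t j)‖ ^ 2)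
        = S t - 1 / (2 * Lmax) * D t := by
      rw [Finset.sum_sub_distrib, ← Finset.mul_sum]
    linarith
  have hanti : Antitone S := antitone_nat_of_succ_le fun t => by
    have h1 := step t
    have h2 : 0 ≤ 1 / (2 * Lmax) * D t := mul_nonneg (by positivity) (hDnn t)
    linarith
  obtain ⟨b, hb⟩ : ∃ b : Fin N → ℝ, ∀ j y, b j ≤ f j y := by
    have : ∀ j, ∃ bj, ∀ y, bj ≤ f j y := fun j => by
      obtain ⟨bj, hbj⟩ := hbdd j
      exact ⟨bj, fun y => hbj (Set.mem_range_self y)⟩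
    exact ⟨fun j => (this j).choose, fun j => (this j).choose_spec⟩
  have hBdd : BddBelow (Set.range S) := by
    refine ⟨∑ j, b j, ?_⟩
    rintro y ⟨t, rfl⟩
    exact Finset.sum_le_sum fun j _ => hb j (x t j)
  have hconv : Filter.Tendsto S Filter.atTop (nhds (⨅ t, S t)) :=
    tendsto_atTop_ciInf hanti hBdd
  have hconv' : Filter.Tendsto (fun t => S (t + 1)) Filter.atTop (nhds (⨅ t, S t)) :=
    hconv.comp (Filter.tendsto_add_atTop_nat 1)
  have hdiffS : Filter.Tendsto (fun t => S t - S (t + 1)) Filter.atTop (nhds 0) := by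
    simpa using hconv.sub hconv'
  have hDt : Filter.Tendsto D Filter.atTop (nhds 0) := by
    have hub : ∀ t, D t ≤ (S t - S (t + 1)) * (2 * Lmax) := by
      intro t
      have h1 := step t
      have h2 : 1 / (2 * Lmax) * D t ≤ S t - S (t + 1) := by linarith
      calc D t = 1 / (2 * Lmax) * D t * (2 * Lmax) := by field_simp
        _ ≤ (S t - S (t + 1)) * (2 * Lmax) :=
            mul_le_mul_of_nonneg_right h2 (by positivity)
    have hg : Filter.Tendsto (fun t => (S t - S (t + 1)) * (2 * Lmax))
        Filter.atTop (nhds 0) := by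
      simpa using hdiffS.mul_const (2 * Lmax)
    exact squeeze_zero hDnn hub hg
  have hk2 : Filter.Tendsto (fun t => ‖gradient (f k) (x t k)‖ ^ 2)
      Filter.atTop (nhds 0) := by
    refine squeeze_zero (fun t => sq_nonneg _) (fun t => ?_) hDt
    exact Finset.single_le_sum (fun j _ => sq_nonneg (‖gradient (f j) (x t j)‖))
      (Finset.mem_univ k)
  have hnorm : Filter.Tendsto (fun t => ‖gradient (f k) (x t k)‖)
      Filter.atTop (nhds 0) := by
    have := hk2.sqrt
    simpa [Real.sqrt_sq (norm_nonneg _)] using this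
  exact tendsto_zero_iff_norm_tendsto_zero.mpr hnorm
end
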